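/- Let V ⊆ V' be an immediate extension of valuation rings with fraction fields K ⊆ K', let (v_i)_{i<λ} be an algebraic pseudo convergent sequence in V with pseudo limit x ∈ V' but no pseudo limit in K, and let g ∈ V[Y] have degree strictly less than the minimal degree s of polynomials f ∈ V[Y] with val(f(v_i)) eventually strictly increasing. Then val(g(x)) = val(g(v_i)) for all sufficiently large i < λ; in particular val(g(x)) lies in the value group of V and is eventually constant along the sequence. -/

import Mathlib

open Polynomial

section ValuationDefs

variable {Γ : Type*} [AddCommGroup Γ] [LinearOrder Γ] [IsOrderedAddMonoid Γ] {K : Type*} [Field K]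

/-- `val` is an (additive, Krull) valuation on the field `K` with values in
`WithTop Γ`: `val 0 = ⊤`, nonzero elements have values in `Γ`, `val` is
multiplicative-to-additive and satisfies the ultrametric inequality.
The valuation ring is `{x | 0 ≤ val x}`. -/
def IsAddValuation (val : K → WithTop Γ) : Prop :=
  val 0 = ⊤ ∧ (∀ x : K, x ≠ 0 → val x ≠ ⊤) ∧
    (∀ x y : K, val (x * y) = val x + val y) ∧
    ∀ x y : K, min (val x) (val y) ≤ val (x + y)

/-- The valuation ring of the subfield `K₀` gives an immediate extension inside
the valued field `K`: the inclusion induces isomorphisms on value groups and on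
residue fields. -/
def IsImmediate (val : K → WithTop Γ) (K₀ : Subfield K) : Prop :=
  (∀ x : K, x ≠ 0 → ∃ y ∈ K₀, val y = val x) ∧
    ∀ x : K, val x = 0 → ∃ y ∈ K₀, 0 < val (x - y)

/-- `(v i)_{i < lam}` is a pseudo convergent sequence:
`val (v i - v i'') < val (v i' - v i'')` for `i < i' < i'' < lam`. -/
def PseudoConvergent (val : K → WithTop Γ) (lam : Ordinal) (v : Ordinal → K) : Prop :=
  ∀ i i' i'' : Ordinal, i < i' → i' < i'' → i'' < lam →
    val (v i - v i'') < val (v i' - v i'')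

/-- `x` is a pseudo limit of `(v i)_{i < lam}`: `val (x - v i)` is strictly
increasing in `i`. -/
def IsPseudoLimit (val : K → WithTop Γ) (lam : Ordinal) (v : Ordinal → K) (x : K) : Prop :=
  ∀ i i' : Ordinal, i < i' → i' < lam → val (x - v i) < val (x - v i')

/-- the polynomial `f` has all its coefficients in the valuation ring of the
subfield `K₀`, i.e. `f ∈ V[X]` where `V = K₀ ∩ {0 ≤ val}`. -/
def CoeffsIn (val : K → WithTop Γ) (K₀ : Subfield K) (f : Polynomial K) : Prop :=
  ∀ n : ℕ, f.coeff n ∈ K₀ ∧ 0 ≤ val (f.coeff n)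

/-- the values of `f` along the sequence `v` are eventually strictly
increasing (witnessing that `v` is algebraic via `f`). -/
def EvIncreasing (val : K → WithTop Γ) (lam : Ordinal) (v : Ordinal → K)
    (f : Polynomial K) : Prop :=
  ∃ ν : Ordinal, ν < lam ∧ ∀ i i' : Ordinal, ν < i → i < i' → i' < lam →
    val (f.eval (v i)) < val (f.eval (v i'))

end ValuationDefs

section AuxLemmas
variable {Γ : Type*} [AddCommGroup Γ] [LinearOrder Γ] [IsOrderedAddMonoid Γ] {K : Type*} [Field K]
variable {val : K → WithTop Γ}

lemma aux_val_one (hval : IsAddValuation val) : val 1 = 0 := by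
  have h := hval.2.2.1 1 1
  rw [one_mul] at h
  have hne : val 1 ≠ ⊤ := hval.2.1 1 one_ne_zero
  lift val 1 to Γ using hne with a ha
  rw [← WithTop.coe_add, WithTop.coe_eq_coe] at h
  have h0 : a = 0 := by
    have := add_left_cancel (a := a) (b := (0:Γ)) (c := a) (by rw [add_zero]; exact h)
    exact this.symm
  exact_mod_cast h0

lemma aux_val_neg (hval : IsAddValuation val) (y : K) : val (-y) = val y := by
  have hm1 : val (-1 : K) = 0 := by
    have h := hval.2.2.1 (-1) (-1)
    rw [neg_mul_neg, one_mul, aux_val_one hval] at h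
    have hne : val (-1 : K) ≠ ⊤ := hval.2.1 _ (by norm_num)
    lift val (-1 : K) to Γ using hne with a ha
    rw [← WithTop.coe_add, eq_comm, WithTop.coe_eq_zero] at h
    rw [WithTop.coe_eq_zero]
    rcases lt_trichotomy a 0 with h1 | h1 | h1
    · have h2 := add_lt_add h1 h1
      rw [h, add_zero] at h2
      exact absurd h2 (lt_irrefl _)
    · exact h1
    · have h2 := add_lt_add h1 h1
      rw [h, add_zero] at h2
      exact absurd h2 (lt_irrefl _)
  calc val (-y) = val ((-1) * y) := by rw [neg_one_mul]
    _ = val (-1 : K) + val y := hval.2.2.1 _ _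
    _ = val y := by rw [hm1, zero_add]

lemma aux_val_add_eq (hval : IsAddValuation val) {a b : K} (h : val a < val b) :
    val (a + b) = val a := by
  refine le_antisymm ?_ ?_
  · by_contra hlt
    push_neg at hlt
    have h2 : min (val (a+b)) (val (-b)) ≤ val ((a+b) + (-b)) := hval.2.2.2 _ _
    rw [add_neg_cancel_right] at h2
    rw [aux_val_neg hval] at h2
    exact absurd h2 (not_le.2 (lt_min hlt h))
  · calc val a = min (val a) (val b) := (min_eq_left h.le).symm
      _ ≤ val (a + b) := hval.2.2.2 _ _

lemma aux_val_pow (hval : IsAddValuation val) (y : K) (n : ℕ) :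
    val (y ^ n) = n • val y := by
  induction n with
  | zero => simp [aux_val_one hval]
  | succ n ih =>
    rw [pow_succ, hval.2.2.1, ih, succ_nsmul]

lemma aux_val_sum_lt (hval : IsAddValuation val) {b : WithTop Γ} (hb : b ≠ ⊤)
    {F : Finset ℕ} {t : ℕ → K} (h : ∀ k ∈ F, b < val (t k)) :
    b < val (∑ k ∈ F, t k) := by
  classical
  induction F using Finset.induction with
  | empty => simp [hval.1]; exact lt_top_iff_ne_top.2 hb
  | @insert a s ha ih =>
    rw [Finset.sum_insert ha]
    have h1 : b < min (val (t a)) (val (∑ k ∈ s, t k)) :=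
      lt_min (h a (Finset.mem_insert_self a s)) (ih fun k hk => h k (Finset.mem_insert_of_mem hk))
    exact lt_of_lt_of_le h1 (hval.2.2.2 _ _)

lemma aux_val_natCast (hval : IsAddValuation val) (n : ℕ) : 0 ≤ val (n : K) := by
  induction n with
  | zero => simp [hval.1]
  | succ n ih =>
    push_cast
    refine le_trans (le_min ih (by rw [aux_val_one hval])) (hval.2.2.2 _ _)

lemma aux_add_nonneg {a b : WithTop Γ} (ha : 0 ≤ a) (hb : 0 ≤ b) : 0 ≤ a + b := by
  calc (0 : WithTop Γ) = 0 + 0 := (add_zero 0).symm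
    _ ≤ a + b := add_le_add ha hb

lemma aux_nsmul_ne_top {a : WithTop Γ} (ha : a ≠ ⊤) (n : ℕ) : n • a ≠ ⊤ := by
  lift a to Γ using ha
  rw [← WithTop.coe_nsmul]
  exact WithTop.coe_ne_top

lemma aux_nsmul_lt {a b : WithTop Γ} (ha : a ≠ ⊤) (hb : b ≠ ⊤) (h : a < b) {n : ℕ}
    (hn : 0 < n) : n • a < n • b := by
  lift a to Γ using ha; lift b to Γ using hb
  rw [← WithTop.coe_nsmul, ← WithTop.coe_nsmul, WithTop.coe_lt_coe]
  rw [WithTop.coe_lt_coe] at h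
  have h1 : 0 < n • (b - a) := nsmul_pos (sub_pos.2 h) hn.ne'
  rw [nsmul_sub] at h1
  exact sub_pos.mp h1

lemma aux_flip {a b γ δ : Γ} {m n : ℕ} (hmn : m < n) (hγδ : γ < δ)
    (h : a + (m+1) • γ ≤ b + (n+1) • γ) : a + (m+1) • δ < b + (n+1) • δ := by
  have hd : (0:Γ) < δ - γ := sub_pos.2 hγδ
  have h1 : (m+1) • (δ - γ) < (n+1) • (δ - γ) := nsmul_lt_nsmul_left hd (by omega)
  have e : ∀ k : ℕ, k • δ = k • γ + k • (δ - γ) := fun k => by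
    rw [← nsmul_add, add_sub_cancel]
  calc a + (m+1) • δ = (a + (m+1) • γ) + (m+1) • (δ - γ) := by rw [e]; abel
    _ ≤ (b + (n+1) • γ) + (m+1) • (δ - γ) := add_le_add h le_rfl
    _ < (b + (n+1) • γ) + (n+1) • (δ - γ) := add_lt_add_of_le_of_lt le_rfl h1
    _ = b + (n+1) • δ := by rw [e (n+1)]; abel

lemma aux_flip_top {a b γ δ : WithTop Γ} (ha : a ≠ ⊤) (hb : b ≠ ⊤) (hγ : γ ≠ ⊤) (hδ : δ ≠ ⊤)
    {m n : ℕ} (hmn : m < n) (hγδ : γ < δ)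
    (h : a + (m+1) • γ ≤ b + (n+1) • γ) : a + (m+1) • δ < b + (n+1) • δ := by
  lift a to Γ using ha; lift b to Γ using hb; lift γ to Γ using hγ; lift δ to Γ using hδ
  rw [← WithTop.coe_nsmul, ← WithTop.coe_nsmul, ← WithTop.coe_add, ← WithTop.coe_add,
    WithTop.coe_le_coe] at h
  rw [← WithTop.coe_nsmul, ← WithTop.coe_nsmul, ← WithTop.coe_add, ← WithTop.coe_add,
    WithTop.coe_lt_coe]
  rw [WithTop.coe_lt_coe] at hγδ
  exact aux_flip hmn hγδ h

lemma aux_evmin {lam : Ordinal} (h0 : 0 < lam) (w : ℕ → Ordinal → WithTop Γ) :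
    ∀ T : Finset ℕ, T.Nonempty →
      (∀ j ∈ T, ∀ j' ∈ T, j ≠ j' → ∃ ν, ν < lam ∧
        ((∀ i, ν < i → i < lam → w j i < w j' i) ∨ (∀ i, ν < i → i < lam → w j' i < w j i))) →
      ∃ j ∈ T, ∃ ν, ν < lam ∧ ∀ i, ν < i → i < lam → ∀ j' ∈ T, j' ≠ j → w j i < w j' i := by
  classical
  intro T
  induction T using Finset.cons_induction with
  | empty => intro h; exact absurd h (by simp)
  | cons a s hanotin ih =>
    intro _ hp
    rcases s.eq_empty_or_nonempty with rfl | hs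
    · refine ⟨a, by simp, 0, h0, fun i _ _ j' hj' hne => ?_⟩
      simp at hj'; exact absurd hj' hne
    · obtain ⟨j, hj, ν, hν, hmin⟩ := ih hs (fun j hj j' hj' hne =>
        hp j (Finset.mem_cons_of_mem hj) j' (Finset.mem_cons_of_mem hj') hne)
      have hane : a ≠ j := fun h => hanotin (h ▸ hj)
      obtain ⟨ν', hν', hcomp⟩ := hp a (Finset.mem_cons_self a s) j (Finset.mem_cons_of_mem hj) hane
      rcases hcomp with hlt | hgt
      · refine ⟨a, Finset.mem_cons_self a s, max ν ν', max_lt hν hν', ?_⟩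
        intro i hi hilam j' hj' hne
        have hiν : ν < i := lt_of_le_of_lt (le_max_left _ _) hi
        have hiν' : ν' < i := lt_of_le_of_lt (le_max_right _ _) hi
        rcases Finset.mem_cons.mp hj' with rfl | hj's
        · exact absurd rfl hne
        · rcases eq_or_ne j' j with rfl | hj'j
          · exact hlt i hiν' hilam
          · exact lt_trans (hlt i hiν' hilam) (hmin i hiν hilam j' hj's hj'j)
      · refine ⟨j, Finset.mem_cons_of_mem hj, max ν ν', max_lt hν hν', ?_⟩
        intro i hi hilam j' hj' hne
        have hiν : ν < i := lt_of_le_of_lt (le_max_left _ _) hi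
        have hiν' : ν' < i := lt_of_le_of_lt (le_max_right _ _) hi
        rcases Finset.mem_cons.mp hj' with rfl | hj's
        · exact hgt i hiν' hilam
        · exact hmin i hiν hilam j' hj's hne


lemma aux_key (val : K → WithTop Γ) (hval : IsAddValuation val)
    (Ksub : Subfield K) (lam : Ordinal) (hlam : Order.IsSuccLimit lam)
    (v : Ordinal → K) (x : K)
    (hlim : ∀ i i' : Ordinal, i < i' → i' < lam → val (x - v i) < val (x - v i'))
    (s : ℕ)
    (hs : ∀ n ∈ {n : ℕ | ∃ f : Polynomial K,
      CoeffsIn val Ksub f ∧ f.natDegree = n ∧ EvIncreasing val lam v f}, s ≤ n) :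
    ∀ d : ℕ, ∀ g : Polynomial K, CoeffsIn val Ksub g → g.natDegree < s → g.natDegree ≤ d →
      ∃ ν, ν < lam ∧ ∀ i, ν < i → i < lam → val (g.eval x) = val (g.eval (v i)) := by
  classical
  have hmul := hval.2.2.1
  set γ : Ordinal → WithTop Γ := fun i => val (x - v i) with hγdef
  have hγtop : ∀ i, i < lam → γ i ≠ ⊤ := fun i hi =>
    ne_top_of_lt (hlim i (Order.succ i) (Order.lt_succ i) (hlam.succ_lt hi))
  have hvv : ∀ i i', i < i' → i' < lam → val (v i' - v i) = γ i := by
    intro i i' hii' hi'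
    have he : v i' - v i = (x - v i) + -(x - v i') := by ring
    rw [he, aux_val_add_eq hval]
    rw [aux_val_neg hval]
    exact hlim i i' hii' hi'
  have hinj : ∀ i i', i < i' → i' < lam → v i ≠ v i' := by
    intro i i' hii' hi' he
    have := hlim i i' hii' hi'
    rw [he] at this
    exact absurd this (lt_irrefl _)
  have haddnat : ∀ a : Ordinal, a < lam → ∀ m : ℕ, a + (m : Ordinal) < lam := by
    intro a ha m
    induction m with
    | zero => simpa using ha
    | succ m ihm =>
      have : a + ((m:Ordinal) + 1) = (a + (m:Ordinal)) + 1 := by rw [add_assoc]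
      push_cast
      rw [this, Ordinal.add_one_eq_succ]
      exact hlam.succ_lt ihm
  intro d
  induction d with
  | zero =>
    intro g hg hgs hgd
    have h0 : g.natDegree = 0 := Nat.le_zero.mp hgd
    refine ⟨0, hlam.pos, fun i _ _ => ?_⟩
    rw [eq_C_of_natDegree_eq_zero h0]; simp
  | succ d ih =>
    intro g hg hgs hgd
    rcases Nat.eq_zero_or_pos g.natDegree with h0 | hpos
    · refine ⟨0, hlam.pos, fun i _ _ => ?_⟩
      rw [eq_C_of_natDegree_eq_zero h0]; simp
    · have hgne : g ≠ 0 := fun h => by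
        rw [h, natDegree_zero] at hpos; exact absurd hpos (lt_irrefl 0)
      set D := g.natDegree with hD
      set G : ℕ → Polynomial K := fun j => hasseDeriv (j+1) g with hGdef
      have hGdeg : ∀ j : ℕ, (G j).natDegree ≤ D - 1 := by
        intro j
        refine le_trans (natDegree_hasseDeriv_le g (j+1)) ?_
        omega
      have hGcoeffs : ∀ j : ℕ, CoeffsIn val Ksub (G j) := by
        intro j n
        simp only [hGdef, hasseDeriv_coeff]
        constructor
        · exact mul_mem (natCast_mem Ksub _) (hg _).1
        · rw [hmul]
          exact aux_add_nonneg (aux_val_natCast hval _) (hg _).2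
      have hih : ∀ j : ℕ, ∃ ν, ν < lam ∧ ∀ i, ν < i → i < lam →
          val ((G j).eval x) = val ((G j).eval (v i)) := by
        intro j
        exact ih (G j) (hGcoeffs j) (lt_of_le_of_lt (hGdeg j) (by omega))
          (le_trans (hGdeg j) (by omega))
      choose νG hνGlam hνG using hih
      set N₀ : Ordinal := (Finset.range D).sup νG with hN₀
      have hN₀lam : N₀ < lam := by
        rw [hN₀]
        refine (Finset.sup_lt_iff hlam.pos).mpr ?_
        intro j _; exact hνGlam j
      have hN₀le : ∀ j ∈ Finset.range D, νG j ≤ N₀ := fun j hj => Finset.le_sup hj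
      set c : ℕ → WithTop Γ := fun j => val ((G j).eval x) with hc
      set S : Finset ℕ := (Finset.range D).filter (fun j => G j ≠ 0) with hS
      have hSsub : S ⊆ Finset.range D := Finset.filter_subset _ _
      have hSne : S.Nonempty := by
        refine ⟨D - 1, Finset.mem_filter.mpr ⟨Finset.mem_range.mpr (by omega), ?_⟩⟩
        intro h
        have h1 : (G (D-1)).coeff 0 = 0 := by rw [h]; simp
        rw [hGdef] at h1
        simp only [hasseDeriv_coeff, zero_add] at h1
        have h2 : D - 1 + 1 = D := by omega
        rw [h2, Nat.choose_self] at h1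
        simp at h1
        exact (Polynomial.leadingCoeff_ne_zero.mpr hgne) (by rwa [Polynomial.leadingCoeff])
      -- c j is finite for j ∈ S
      have hctop : ∀ j ∈ S, c j ≠ ⊤ := by
        intro j hjS hcj
        have hGj : G j ≠ 0 := (Finset.mem_filter.mp hjS).2
        have hidxlam : ∀ m : ℕ, νG j + 1 + (m:Ordinal) < lam := by
          intro m
          have h := haddnat (νG j) (hνGlam j) (1+m)
          push_cast at h
          rwa [← add_assoc] at h
        have hroots : ∀ m : ℕ, (G j).eval (v (νG j + 1 + (m:Ordinal))) = 0 := by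
          intro m
          have hgt : νG j < νG j + 1 + (m:Ordinal) := by
            calc νG j < νG j + 1 := lt_of_lt_of_le (Order.lt_succ _) (by rw [Ordinal.add_one_eq_succ])
              _ ≤ νG j + 1 + (m:Ordinal) := le_self_add
          have hthis := hνG j _ hgt (hidxlam m)
          have htop : val ((G j).eval x) = ⊤ := hcj
          rw [htop] at hthis
          by_contra hne
          exact hval.2.1 _ hne hthis.symm
        have hne2 : ∀ m m' : ℕ, m < m' →
            v (νG j + 1 + (m:Ordinal)) ≠ v (νG j + 1 + (m':Ordinal)) := by
          intro m m' hmm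
          refine hinj _ _ ?_ (hidxlam m')
          rw [add_lt_add_iff_left]
          exact_mod_cast hmm
        have hfinj : Function.Injective
            (fun m : Fin ((G j).natDegree + 1) => v (νG j + 1 + ((m : ℕ) : Ordinal))) := by
          intro m m' he
          by_contra hne
          have hmm : (m : ℕ) ≠ (m' : ℕ) := fun h => hne (Fin.ext h)
          rcases hmm.lt_or_gt with hlt | hlt
          · exact hne2 _ _ hlt he
          · exact hne2 _ _ hlt he.symm
        have := eq_zero_of_natDegree_lt_card_of_eval_eq_zero (G j) hfinj
          (fun m => hroots m) (by simp)
        exact hGj this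
      set w : ℕ → Ordinal → WithTop Γ := fun j i => c j + (j+1) • γ i with hw
      have hpairlt : ∀ j ∈ S, ∀ j' ∈ S, j < j' → ∃ ν, ν < lam ∧
          ((∀ i, ν < i → i < lam → w j i < w j' i) ∨
            (∀ i, ν < i → i < lam → w j' i < w j i)) := by
        intro j hj j' hj' hjj'
        by_cases hE : ∃ i₀, i₀ < lam ∧ w j i₀ ≤ w j' i₀
        · obtain ⟨i₀, hi₀, hle⟩ := hE
          refine ⟨i₀, hi₀, Or.inl ?_⟩
          intro i hi hilam
          exact aux_flip_top (hctop j hj) (hctop j' hj') (hγtop i₀ hi₀) (hγtop i hilam)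
            hjj' (hlim i₀ i hi hilam) hle
        · push_neg at hE
          exact ⟨0, hlam.pos, Or.inr (fun i _ hilam => hE i hilam)⟩
      have hpairs : ∀ j ∈ S, ∀ j' ∈ S, j ≠ j' → ∃ ν, ν < lam ∧
          ((∀ i, ν < i → i < lam → w j i < w j' i) ∨
            (∀ i, ν < i → i < lam → w j' i < w j i)) := by
        intro j hj j' hj' hne
        rcases hne.lt_or_gt with h | h
        · exact hpairlt j hj j' hj' h
        · obtain ⟨ν, hν, hor⟩ := hpairlt j' hj' j hj h
          exact ⟨ν, hν, hor.symm⟩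
      obtain ⟨jstar, hjstarS, ν₁, hν₁lam, hstar⟩ := aux_evmin hlam.pos w S hSne hpairs
      set ν₂ : Ordinal := max N₀ ν₁ with hν₂
      have hν₂lam : ν₂ < lam := max_lt hN₀lam hν₁lam
      have hcstar : c jstar ≠ ⊤ := hctop _ hjstarS
      have hjstarD : jstar ∈ Finset.range D := hSsub hjstarS
      have hδtop : ∀ i, i < lam → w jstar i ≠ ⊤ := by
        intro i hi
        exact WithTop.add_ne_top.mpr ⟨hcstar, aux_nsmul_ne_top (hγtop i hi) _⟩
      have hδmono : ∀ i i', i < i' → i' < lam → w jstar i < w jstar i' := by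
        intro i i' hii' hi'
        refine WithTop.add_lt_add_left hcstar ?_
        exact aux_nsmul_lt (hγtop i (hii'.trans hi')) (hγtop i' hi')
          (hlim i i' hii' hi') (by omega)
      have hvalGj : ∀ j ∈ Finset.range D, ∀ i, ν₂ < i → i < lam →
          val ((G j).eval (v i)) = c j := by
        intro j hj i hi hilam
        exact (hνG j i (lt_of_le_of_lt (le_trans (hN₀le j hj) (le_max_left _ _)) hi) hilam).symm
      have hTay : ∀ i, ν₂ < i → i < lam → ∀ y : K, val (y - v i) = γ i →
          val (g.eval y - g.eval (v i)) = w jstar i := by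
        intro i hi hilam y hy
        have htay : g.eval y - g.eval (v i) =
            ∑ j ∈ Finset.range D, (G j).eval (v i) * (y - v i)^(j+1) := by
          have h1 := eval_eq_sum_range (p := (taylor (v i)) g) (y - v i)
          rw [taylor_eval, sub_add_cancel, natDegree_taylor, Finset.sum_range_succ'] at h1
          simp only [taylor_coeff, taylor_coeff_zero, pow_zero, mul_one, hasseDeriv_zero'] at h1
          simp only [hGdef]
          rw [hD, h1]
          ring
        have htermval : ∀ j : ℕ, val ((G j).eval (v i) * (y - v i)^(j+1)) =
            val ((G j).eval (v i)) + (j+1) • γ i := by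
          intro j
          rw [hmul, aux_val_pow hval, hy]
        have hstarval : val ((G jstar).eval (v i) * (y - v i)^(jstar+1)) = w jstar i := by
          rw [htermval, hvalGj jstar hjstarD i hi hilam]
        have hother : ∀ j ∈ (Finset.range D).erase jstar,
            w jstar i < val ((G j).eval (v i) * (y - v i)^(j+1)) := by
          intro j hj
          obtain ⟨hne, hjD⟩ := Finset.mem_erase.mp hj
          by_cases hjS' : j ∈ S
          · rw [htermval, hvalGj j hjD i hi hilam]
            exact hstar i (lt_of_le_of_lt (le_max_right _ _) hi) hilam j hjS' hne
          · have hGj0 : G j = 0 := by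
              by_contra h
              exact hjS' (Finset.mem_filter.mpr ⟨hjD, h⟩)
            rw [hGj0]
            simp only [eval_zero, zero_mul, hval.1]
            exact lt_top_iff_ne_top.2 (hδtop i hilam)
        have hrest : w jstar i <
            val (∑ j ∈ (Finset.range D).erase jstar, (G j).eval (v i) * (y - v i)^(j+1)) :=
          aux_val_sum_lt hval (hδtop i hilam) hother
        rw [htay, ← Finset.add_sum_erase _ _ hjstarD,
          aux_val_add_eq hval (by rw [hstarval]; exact hrest), hstarval]
      have hdx : ∀ i, ν₂ < i → i < lam → val (g.eval x - g.eval (v i)) = w jstar i :=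
        fun i hi hilam => hTay i hi hilam x rfl
      have hdv : ∀ i i', ν₂ < i → i < i' → i' < lam →
          val (g.eval (v i') - g.eval (v i)) = w jstar i :=
        fun i i' hi hii' hi' => hTay i hi (hii'.trans hi') (v i') (hvv i i' hii' hi')
      by_cases hcase : ∃ i₀, ν₂ < i₀ ∧ i₀ < lam ∧ val (g.eval (v i₀)) < w jstar i₀
      · obtain ⟨i₀, hi₀, hi₀lam, hlt⟩ := hcase
        refine ⟨i₀, hi₀lam, fun i hi hilam => ?_⟩
        have h1 : val (g.eval x) = val (g.eval (v i₀)) := by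
          have he : g.eval x = g.eval (v i₀) + (g.eval x - g.eval (v i₀)) := by ring
          have hlt' : val (g.eval (v i₀)) < val (g.eval x - g.eval (v i₀)) := by
            rw [hdx i₀ hi₀ hi₀lam]; exact hlt
          rw [he, aux_val_add_eq hval hlt']
        have h2 : val (g.eval (v i)) = val (g.eval (v i₀)) := by
          have he : g.eval (v i) = g.eval (v i₀) + (g.eval (v i) - g.eval (v i₀)) := by ring
          have hlt' : val (g.eval (v i₀)) < val (g.eval (v i) - g.eval (v i₀)) := by
            rw [hdv i₀ i hi₀ hi hilam]; exact hlt
          rw [he, aux_val_add_eq hval hlt']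
        rw [h1, h2]
      · push_neg at hcase
        exfalso
        have heq : ∀ i, ν₂ < i → i < lam → val (g.eval (v i)) = w jstar i := by
          intro i hi hilam
          rcases eq_or_lt_of_le (hcase i hi hilam) with h | h
          · exact h.symm
          · exfalso
            have hi'lam : Order.succ i < lam := hlam.succ_lt hilam
            have hii' : i < Order.succ i := Order.lt_succ i
            have hlt' : val (g.eval (v (Order.succ i)) - g.eval (v i)) < val (g.eval (v i)) := by
              rw [hdv i _ hi hii' hi'lam]; exact h
            have h2 : val (g.eval (v (Order.succ i))) = w jstar i := by
              have he : g.eval (v (Order.succ i)) =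
                  (g.eval (v (Order.succ i)) - g.eval (v i)) + g.eval (v i) := by ring
              rw [he, aux_val_add_eq hval hlt', hdv i _ hi hii' hi'lam]
            have h3 := hcase _ (hi.trans hii') hi'lam
            rw [h2] at h3
            exact absurd (lt_of_le_of_lt h3 (hδmono i _ hii' hi'lam)) (lt_irrefl _)
        have hsle : s ≤ D := hs D ⟨g, hg, hD.symm, ⟨ν₂, hν₂lam, fun i i' hi hii' hi' => by
          rw [heq i hi (hii'.trans hi'), heq i' (hi.trans hii') hi']
          exact hδmono i i' hii' hi'⟩⟩
        omega

end AuxLemmas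

/-- **Value computation part of Lemma 1.1.**
Let `V ⊆ V'` be an immediate extension of valuation rings, `(v i)_{i<λ}` an
algebraic pseudo convergent sequence in `V` with pseudo limit `x ∈ V'` but no
pseudo limit in `K`, and let `g ∈ V[Y]` have degree strictly less than the
minimal degree `s` of polynomials with eventually strictly increasing values
along `v`.  Then `val (g x) = val (g (v i))` for all sufficiently large `i < λ`;
in particular `val (g x)` is eventually constant along the sequence. -/
theorem val_g_eventually_eq {Γ : Type*} [AddCommGroup Γ] [LinearOrder Γ] [IsOrderedAddMonoid Γ]
    {K' : Type*} [Field K'] (val : K' → WithTop Γ) (hval : IsAddValuation val)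
    (Ksub : Subfield K') (himm : IsImmediate val Ksub)
    (lam : Ordinal) (hlam : Order.IsSuccLimit lam)
    (v : Ordinal → K') (hv : ∀ i : Ordinal, i < lam → v i ∈ Ksub ∧ 0 ≤ val (v i))
    (hpc : PseudoConvergent val lam v)
    (x : K') (hx : 0 ≤ val x) (hlim : IsPseudoLimit val lam v x)
    (hnolim : ¬ ∃ y : K', y ∈ Ksub ∧ IsPseudoLimit val lam v y)
    (s : ℕ)
    (hs : IsLeast {n : ℕ | ∃ f : Polynomial K',
      CoeffsIn val Ksub f ∧ f.natDegree = n ∧ EvIncreasing val lam v f} s)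
    (g : Polynomial K') (hg : CoeffsIn val Ksub g) (hdeg : g.natDegree < s) :
    ∃ ν : Ordinal, ν < lam ∧ ∀ i : Ordinal, ν < i → i < lam →
      val (g.eval x) = val (g.eval (v i)) := by
  exact aux_key val hval Ksub lam hlam v x (fun i i' h h' => hlim i i' h h') s
    (fun n hn => hs.2 hn) g.natDegree g hg hdeg le_rfl
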